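/- Let A and B be real symmetric positive semidefinite p×p matrices and let λ > 0. Then |tr((A + λI_p)⁻¹) − tr((B + λI_p)⁻¹)| ≤ rank(A − B)/λ. -/

import Mathlib

open Matrix

section Aux

variable {p : ℕ}

private lemma smul_one_posDef {lam : ℝ} (hlam : 0 < lam) :
    (lam • (1 : Matrix (Fin p) (Fin p) ℝ)).PosDef := by
  rw [Matrix.smul_one_eq_diagonal]
  exact Matrix.PosDef.diagonal fun _ => hlam

private lemma smul_posSemidef {C : Matrix (Fin p) (Fin p) ℝ} (hC : C.PosSemidef)
    {lam : ℝ} (hlam : 0 ≤ lam) : (lam • C).PosSemidef := by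
  refine Matrix.PosSemidef.of_dotProduct_mulVec_nonneg ?_ fun x => ?_
  · unfold Matrix.IsHermitian
    rw [conjTranspose_smul, hC.isHermitian]
    simp
  · have := hC.dotProduct_mulVec_nonneg x
    simp only [smul_mulVec, dotProduct_smul, smul_eq_mul]
    positivity

/-- `(1/lam) • 1 - (C + lam • 1)⁻¹` is PSD. -/
private lemma key_psd {C : Matrix (Fin p) (Fin p) ℝ} (hC : C.PosSemidef)
    {lam : ℝ} (hlam : 0 < lam) :
    ((1 / lam) • (1 : Matrix (Fin p) (Fin p) ℝ)
      - (C + lam • 1)⁻¹).PosSemidef := by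
  set D : Matrix (Fin p) (Fin p) ℝ := C + lam • 1 with hD
  have hDpd : D.PosDef := Matrix.PosDef.posSemidef_add hC (smul_one_posDef hlam)
  have hDu : IsUnit D := hDpd.isUnit
  have hDinv : D⁻¹.IsHermitian := hDpd.isHermitian.inv
  have hmain : (1 / lam) • (1 : Matrix (Fin p) (Fin p) ℝ) - D⁻¹
      = (1/lam) • (D⁻¹ * (C * C + lam • C) * D⁻¹) := by
    have h1 : C * C + lam • C = C * D := by
      rw [hD, Matrix.mul_add, Matrix.mul_smul, Matrix.mul_one]
    have h2 : D⁻¹ * (C * D) * D⁻¹ = D⁻¹ * C := by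
      rw [Matrix.mul_assoc (D⁻¹) (C * D) (D⁻¹), Matrix.mul_assoc C D (D⁻¹),
        Matrix.mul_nonsing_inv _ ((Matrix.isUnit_iff_isUnit_det D).mp hDu), Matrix.mul_one]
    have h3 : D⁻¹ * C = 1 - lam • D⁻¹ := by
      have : C = D - lam • 1 := by rw [hD]; abel
      rw [this, Matrix.mul_sub, Matrix.mul_smul, Matrix.mul_one,
        Matrix.nonsing_inv_mul _ ((Matrix.isUnit_iff_isUnit_det D).mp hDu)]
    rw [h1, h2, h3, smul_sub, smul_smul]
    rw [one_div, inv_mul_cancel₀ hlam.ne', one_smul]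
  rw [hmain]
  have hCC : (C * C + lam • C).PosSemidef := by
    have h1 : (C * C).PosSemidef := by
      have := Matrix.posSemidef_conjTranspose_mul_self C
      rwa [hC.isHermitian] at this
    exact h1.add (smul_posSemidef hC hlam.le)
  have hconj : (D⁻¹ * (C * C + lam • C) * D⁻¹).PosSemidef := by
    have := hCC.mul_mul_conjTranspose_same D⁻¹
    rwa [hDinv] at this
  exact smul_posSemidef hconj (by positivity)

private lemma quad_bounds {C : Matrix (Fin p) (Fin p) ℝ} (hC : C.PosSemidef)
    {lam : ℝ} (hlam : 0 < lam) (x : Fin p → ℝ) :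
    0 ≤ x ⬝ᵥ ((C + lam • 1)⁻¹ *ᵥ x) ∧
      x ⬝ᵥ ((C + lam • 1)⁻¹ *ᵥ x) ≤ (1 / lam) * (x ⬝ᵥ x) := by
  have hDpd : (C + lam • (1 : Matrix (Fin p) (Fin p) ℝ)).PosDef :=
    Matrix.PosDef.posSemidef_add hC (smul_one_posDef hlam)
  have hinv : (C + lam • (1 : Matrix (Fin p) (Fin p) ℝ))⁻¹.PosSemidef :=
    hDpd.inv.posSemidef
  constructor
  · simpa using hinv.dotProduct_mulVec_nonneg x
  · have := (key_psd hC hlam).dotProduct_mulVec_nonneg x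
    simp only [star_trivial, Matrix.sub_mulVec, Matrix.smul_mulVec,
      Matrix.one_mulVec, dotProduct_sub, dotProduct_smul, smul_eq_mul] at this
    linarith

private lemma trace_eq_sum_eigs {M : Matrix (Fin p) (Fin p) ℝ} (hM : M.IsHermitian) :
    M.trace = ∑ i, hM.eigenvalues i := by
  nth_rewrite 1 [hM.spectral_theorem]
  rw [Unitary.conjStarAlgAut_apply]
  rw [Matrix.trace_mul_comm, ← Matrix.mul_assoc,
    (Matrix.mem_unitaryGroup_iff').mp (hM.eigenvectorUnitary).2, Matrix.one_mul]
  simp [Matrix.trace_diagonal]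

end Aux

/-- For PSD matrices `A`, `B` and `λ > 0`,
`|tr((A + λI)⁻¹) - tr((B + λI)⁻¹)| ≤ rank(A - B)/λ`. -/
theorem stmt_2 (p : ℕ) (A B : Matrix (Fin p) (Fin p) ℝ)
    (hA : A.PosSemidef) (hB : B.PosSemidef) (lam : ℝ) (hlam : 0 < lam) :
    |((A + lam • (1 : Matrix (Fin p) (Fin p) ℝ))⁻¹).trace -
      ((B + lam • (1 : Matrix (Fin p) (Fin p) ℝ))⁻¹).trace| ≤
      ((A - B).rank : ℝ) / lam := by
  set DA : Matrix (Fin p) (Fin p) ℝ := A + lam • 1 with hDA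
  set DB : Matrix (Fin p) (Fin p) ℝ := B + lam • 1 with hDB
  have hDApd : DA.PosDef := Matrix.PosDef.posSemidef_add hA (smul_one_posDef hlam)
  have hDBpd : DB.PosDef := Matrix.PosDef.posSemidef_add hB (smul_one_posDef hlam)
  set M : Matrix (Fin p) (Fin p) ℝ := DB⁻¹ - DA⁻¹ with hMdef
  have hM : M.IsHermitian := hDBpd.isHermitian.inv.sub hDApd.isHermitian.inv
  -- resolvent identity
  have hres : M = DB⁻¹ * (A - B) * DA⁻¹ := by
    have h1 : A - B = DA - DB := by rw [hDA, hDB]; abel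
    rw [h1, Matrix.mul_sub, Matrix.sub_mul,
      Matrix.mul_assoc (DB⁻¹) DA (DA⁻¹),
      Matrix.mul_nonsing_inv _ ((Matrix.isUnit_iff_isUnit_det DA).mp hDApd.isUnit),
      Matrix.nonsing_inv_mul _ ((Matrix.isUnit_iff_isUnit_det DB).mp hDBpd.isUnit),
      Matrix.mul_one, Matrix.one_mul, hMdef]
  -- rank bound
  have hrank : M.rank ≤ (A - B).rank := by
    calc M.rank = (DB⁻¹ * ((A - B) * DA⁻¹)).rank := by rw [hres, Matrix.mul_assoc]
    _ ≤ ((A - B) * DA⁻¹).rank := Matrix.rank_mul_le_right _ _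
    _ ≤ (A - B).rank := Matrix.rank_mul_le_left _ _
  -- eigenvalue bound
  have heig : ∀ i, |hM.eigenvalues i| ≤ 1 / lam := by
    intro i
    set v : Fin p → ℝ := ⇑(hM.eigenvectorBasis i) with hv
    have hvnorm : v ⬝ᵥ v = 1 := by
      have h1 : ‖hM.eigenvectorBasis i‖ = 1 := hM.eigenvectorBasis.orthonormal.1 i
      have h2 : (inner ℝ (hM.eigenvectorBasis i) (hM.eigenvectorBasis i) : ℝ) = 1 := by
        rw [real_inner_self_eq_norm_sq, h1]; norm_num
      rw [← h2, EuclideanSpace.inner_eq_star_dotProduct]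
      simp [hv, dotProduct, mul_comm]
    have hveq : hM.eigenvalues i = v ⬝ᵥ (M *ᵥ v) := by
      have := hM.eigenvalues_eq i
      simpa [hv] using this
    have hAq := quad_bounds hA hlam v
    have hBq := quad_bounds hB hlam v
    rw [hvnorm, mul_one] at hAq hBq
    have hexp : v ⬝ᵥ (M *ᵥ v) = v ⬝ᵥ (DB⁻¹ *ᵥ v) - v ⬝ᵥ (DA⁻¹ *ᵥ v) := by
      rw [hMdef, Matrix.sub_mulVec, dotProduct_sub]
    rw [hveq, hexp, abs_le]
    constructor <;> [linarith [hBq.1, hAq.2]; linarith [hAq.1, hBq.2]]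
  -- put it together
  have htr : DA⁻¹.trace - DB⁻¹.trace = -(M.trace) := by
    rw [hMdef, Matrix.trace_sub]; ring
  rw [htr, abs_neg, trace_eq_sum_eigs hM]
  -- |sum of eigenvalues| ≤ (#nonzero) * (1/lam)
  classical
  set s : Finset (Fin p) := Finset.univ.filter (fun i => hM.eigenvalues i ≠ 0) with hs
  have hsum : ∑ i, hM.eigenvalues i = ∑ i ∈ s, hM.eigenvalues i := by
    rw [hs]
    exact (Finset.sum_filter_ne_zero _).symm
  have hcard : (s.card : ℝ) ≤ ((A - B).rank : ℝ) := by
    have h1 : s.card = Fintype.card {i // hM.eigenvalues i ≠ 0} := by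
      rw [hs, Fintype.card_subtype]
    have h2 : M.rank = Fintype.card {i // hM.eigenvalues i ≠ 0} :=
      hM.rank_eq_card_non_zero_eigs
    have : s.card ≤ (A - B).rank := by omega
    exact_mod_cast this
  calc |∑ i, hM.eigenvalues i| = |∑ i ∈ s, hM.eigenvalues i| := by rw [hsum]
    _ ≤ ∑ i ∈ s, |hM.eigenvalues i| := Finset.abs_sum_le_sum_abs _ _
    _ ≤ ∑ _i ∈ s, (1 / lam) := Finset.sum_le_sum fun i _ => heig i
    _ = s.card * (1 / lam) := by rw [Finset.sum_const, nsmul_eq_mul]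
    _ ≤ ((A - B).rank : ℝ) * (1 / lam) := by
        apply mul_le_mul_of_nonneg_right hcard; positivity
    _ = ((A - B).rank : ℝ) / lam := by ring
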